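/- Let d ≥ 1, 0 ≤ k, m ≤ d, h ∈ [0,1), and define H_k(h) = ((h+1)/2)^{d-k} h^k. Then (1-h)·H_k'(h)·H_m'(h) - (1 - H_k(h))·(H_m'(h) - (1-h)·H_m''(h)) ≥ 0. -/

import Mathlib

open Finset

/-- First derivative of `x ↦ ((x+1)/2)^p * x^q`. -/
noncomputable def Dg (p q : ℕ) (x : ℝ) : ℝ :=
  (p : ℝ) / 2 * (((x + 1) / 2) ^ (p - 1) * x ^ q) +
    (q : ℝ) * (((x + 1) / 2) ^ p * x ^ (q - 1))

lemma hasDerivAt_g (p q : ℕ) (x : ℝ) :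
    HasDerivAt (fun x : ℝ => ((x + 1) / 2) ^ p * x ^ q) (Dg p q x) x := by
  have h1 : HasDerivAt (fun x : ℝ => (x + 1) / 2) (1 / 2) x :=
    ((hasDerivAt_id x).add_const 1).div_const 2
  have h2 : HasDerivAt (fun x : ℝ => ((x + 1) / 2) ^ p * x ^ q)
      ((p : ℝ) * ((x + 1) / 2) ^ (p - 1) * (1 / 2) * x ^ q + ((x + 1) / 2) ^ p * ((q : ℝ) * x ^ (q - 1))) x :=
    (h1.pow p).mul (hasDerivAt_pow q x)
  convert h2 using 1
  unfold Dg
  ring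

lemma deriv_g (p q : ℕ) :
    deriv (fun x : ℝ => ((x + 1) / 2) ^ p * x ^ q) = fun x => Dg p q x :=
  funext fun x => (hasDerivAt_g p q x).deriv

lemma hasDerivAt_Dg (p q : ℕ) (x : ℝ) :
    HasDerivAt (fun x => Dg p q x)
      ((p : ℝ) / 2 * Dg (p - 1) q x + (q : ℝ) * Dg p (q - 1) x) x := by
  have h1 := (hasDerivAt_g (p - 1) q x).const_mul ((p : ℝ) / 2)
  have h2 := (hasDerivAt_g p (q - 1) x).const_mul ((q : ℝ))
  have h3 := h1.add h2
  have heq : (fun x => Dg p q x) =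
      (fun y : ℝ => (p : ℝ) / 2 * (((y + 1) / 2) ^ (p - 1) * y ^ q) +
        (q : ℝ) * (((y + 1) / 2) ^ p * y ^ (q - 1))) := by
    funext y; unfold Dg; ring
  rw [heq]
  exact h3

lemma deriv2_g (p q : ℕ) (x : ℝ) :
    deriv (fun x => Dg p q x) x
      = (p : ℝ) / 2 * Dg (p - 1) q x + (q : ℝ) * Dg p (q - 1) x :=
  (hasDerivAt_Dg p q x).deriv

lemma dg_nonneg (p q : ℕ) (h : ℝ) (h0 : 0 ≤ h) : 0 ≤ Dg p q h := by
  have hu0 : (0 : ℝ) ≤ (h + 1) / 2 := by linarith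
  unfold Dg
  have t1 : (0:ℝ) ≤ (p : ℝ) / 2 := by positivity
  have t2 : (0:ℝ) ≤ (q : ℝ) := Nat.cast_nonneg q
  exact add_nonneg
    (mul_nonneg t1 (mul_nonneg (pow_nonneg hu0 _) (pow_nonneg h0 _)))
    (mul_nonneg t2 (mul_nonneg (pow_nonneg hu0 _) (pow_nonneg h0 _)))

lemma cast_mul_pow_pred (x : ℝ) (n : ℕ) : (n : ℝ) * (x ^ (n - 1) * x) = (n : ℝ) * x ^ n := by
  cases n with
  | zero => simp
  | succ n => rw [Nat.add_sub_cancel, ← pow_succ]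

lemma geomS (a k : ℕ) (h : ℝ) :
    1 - ((h + 1) / 2) ^ a * h ^ k
      = (1 - h) * ((∑ i ∈ Finset.range a, ((h + 1) / 2) ^ i) / 2
          + ((h + 1) / 2) ^ a * ∑ j ∈ Finset.range k, h ^ j) := by
  linear_combination geom_sum_mul ((h + 1) / 2) a + ((h + 1) / 2) ^ a * geom_sum_mul h k

lemma lemA (b m : ℕ) (h : ℝ) (h0 : 0 ≤ h) :
    ((b : ℝ) + (m : ℝ) - 1) * Dg b m h ≤
      (h + 1) * ((b : ℝ) / 2 * Dg (b - 1) m h + (m : ℝ) * Dg b (m - 1) h) := by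
  have hu0 : (0 : ℝ) ≤ (h + 1) / 2 := by linarith
  rcases b with _ | _ | σ <;> rcases m with _ | _ | μ
  · simp [Dg]
  · simp [Dg]
  · have key : (h + 1) * (((0:ℕ) : ℝ) / 2 * Dg (0 - 1) (μ + 2) h
          + (((μ:ℕ) + 2 : ℕ) : ℝ) * Dg 0 (μ + 2 - 1) h)
        - (((0:ℕ) : ℝ) + (((μ:ℕ) + 2 : ℕ) : ℝ) - 1) * Dg 0 (μ + 2) h
        = ((μ : ℝ) + 2) * ((μ : ℝ) + 1) * h ^ μ := by
      simp only [Dg, Nat.zero_sub, Nat.add_sub_cancel]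
      push_cast
      ring_nf
    have hnn : 0 ≤ ((μ : ℝ) + 2) * ((μ : ℝ) + 1) * h ^ μ := by positivity
    push_cast at key ⊢
    linarith
  · simp [Dg]
  · simp only [Dg]
    norm_num
    nlinarith [hu0]
  · have key : (h + 1) * (((1:ℕ) : ℝ) / 2 * Dg (1 - 1) (μ + 2) h
          + (((μ:ℕ) + 2 : ℕ) : ℝ) * Dg 1 (μ + 2 - 1) h)
        - (((1:ℕ) : ℝ) + (((μ:ℕ) + 2 : ℕ) : ℝ) - 1) * Dg 1 (μ + 2) h
        = ((μ : ℝ) + 2) / 2 * h ^ μ * (((μ : ℝ) + 1) + ((μ : ℝ) + 2) * h) := by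
      simp only [Dg, Nat.zero_sub, Nat.add_sub_cancel]
      push_cast
      ring_nf
    have hnn : 0 ≤ ((μ : ℝ) + 2) / 2 * h ^ μ * (((μ : ℝ) + 1) + ((μ : ℝ) + 2) * h) := by
      have ha : (0:ℝ) ≤ ((μ : ℝ) + 2) * h := by positivity
      have hb : (0:ℝ) ≤ ((μ : ℝ) + 1) + ((μ : ℝ) + 2) * h := by linarith
      positivity
    push_cast at key ⊢
    linarith
  · apply le_of_eq
    simp only [Dg, Nat.zero_sub, Nat.add_sub_cancel]
    push_cast
    ring_nf
  · have key : (h + 1) * ((((σ:ℕ) + 2 : ℕ) : ℝ) / 2 * Dg (σ + 2 - 1) 1 h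
          + ((1:ℕ) : ℝ) * Dg (σ + 2) (1 - 1) h)
        - ((((σ:ℕ) + 2 : ℕ) : ℝ) + ((1:ℕ) : ℝ) - 1) * Dg (σ + 2) 1 h
        = ((σ : ℝ) + 2) / 2 * ((h + 1) / 2) ^ (σ + 1) := by
      simp only [Dg, Nat.zero_sub, Nat.add_sub_cancel]
      push_cast
      ring_nf
    have hnn : 0 ≤ ((σ : ℝ) + 2) / 2 * ((h + 1) / 2) ^ (σ + 1) := by positivity
    push_cast at key ⊢
    linarith
  · have key : (h + 1) * ((((σ:ℕ) + 2 : ℕ) : ℝ) / 2 * Dg (σ + 2 - 1) (μ + 2) h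
          + (((μ:ℕ) + 2 : ℕ) : ℝ) * Dg (σ + 2) (μ + 2 - 1) h)
        - ((((σ:ℕ) + 2 : ℕ) : ℝ) + (((μ:ℕ) + 2 : ℕ) : ℝ) - 1) * Dg (σ + 2) (μ + 2) h
        = ((μ : ℝ) + 2) / 2 * ((h + 1) / 2) ^ (σ + 1) * h ^ μ
            * (((μ : ℝ) + 1) + ((σ : ℝ) + (μ : ℝ) + 3) * h) := by
      simp only [Dg, Nat.zero_sub, Nat.add_sub_cancel]
      push_cast
      ring_nf
    have hnn : 0 ≤ ((μ : ℝ) + 2) / 2 * ((h + 1) / 2) ^ (σ + 1) * h ^ μ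
        * (((μ : ℝ) + 1) + ((σ : ℝ) + (μ : ℝ) + 3) * h) := by
      have ha : (0:ℝ) ≤ ((σ : ℝ) + (μ : ℝ) + 3) * h := by positivity
      have hb : (0:ℝ) ≤ ((μ : ℝ) + 1) + ((σ : ℝ) + (μ : ℝ) + 3) * h := by linarith
      positivity
    push_cast at key ⊢
    linarith

lemma lemB (a k : ℕ) (h : ℝ) (h0 : 0 ≤ h) (h1 : h ≤ 1) :
    2 * ((∑ i ∈ Finset.range a, ((h + 1) / 2) ^ i) / 2
        + ((h + 1) / 2) ^ a * ∑ j ∈ Finset.range k, h ^ j)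
      ≤ (h + 1) * Dg a k h
        + ((a : ℝ) + (k : ℝ)) * (1 - ((h + 1) / 2) ^ a * h ^ k) := by
  have hu0 : (0 : ℝ) ≤ (h + 1) / 2 := by linarith
  have hu1 : (h + 1) / 2 ≤ 1 := by linarith
  have pwu := cast_mul_pow_pred ((h + 1) / 2) a
  have pwh := cast_mul_pow_pred h k
  have E1 : (h + 1) * Dg a k h
      = (a : ℝ) * ((h + 1) / 2) ^ a * h ^ k
        + (k : ℝ) * ((h + 1) / 2) ^ a * h ^ (k - 1)
        + (k : ℝ) * ((h + 1) / 2) ^ a * h ^ k := by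
    simp only [Dg]
    linear_combination h ^ k * pwu + ((h + 1) / 2) ^ a * pwh
  have C2 : ∑ i ∈ Finset.range a, (1 - ((h + 1) / 2) ^ i)
      = (a : ℝ) - ∑ i ∈ Finset.range a, ((h + 1) / 2) ^ i := by
    rw [Finset.sum_sub_distrib]
    simp
  have N1 : (0 : ℝ) ≤ ∑ i ∈ Finset.range a, (1 - ((h + 1) / 2) ^ i) :=
    Finset.sum_nonneg fun i _ => by
      have := pow_le_one₀ hu0 hu1 (n := i)
      linarith
  have N1' : (0 : ℝ) ≤ (a : ℝ) - ∑ i ∈ Finset.range a, ((h + 1) / 2) ^ i := C2 ▸ N1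
  have N2 : (0 : ℝ) ≤ (k : ℝ) * (1 - ((h + 1) / 2) ^ a) := by
    have := pow_le_one₀ hu0 hu1 (n := a)
    have hk : (0:ℝ) ≤ (k : ℝ) := Nat.cast_nonneg k
    nlinarith
  have C1 : ∑ j ∈ Finset.range k, ((1 - h ^ j) * (1 - h ^ (k - 1 - j)))
      = (k : ℝ) + (k : ℝ) * h ^ (k - 1) - 2 * ∑ j ∈ Finset.range k, h ^ j := by
    have step : ∀ j ∈ Finset.range k,
        (1 - h ^ j) * (1 - h ^ (k - 1 - j))
          = (1 + h ^ (k - 1)) - (h ^ j + h ^ (k - 1 - j)) := by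
      intro j hj
      have hj' : j + (k - 1 - j) = k - 1 := by
        have := Finset.mem_range.mp hj; omega
      have hmul : h ^ j * h ^ (k - 1 - j) = h ^ (k - 1) := by rw [← pow_add, hj']
      nlinarith [hmul]
    rw [Finset.sum_congr rfl step]
    rw [Finset.sum_sub_distrib, Finset.sum_add_distrib, Finset.sum_add_distrib,
      Finset.sum_const, Finset.sum_const, Finset.card_range,
      Finset.sum_range_reflect (fun j => h ^ j) k]
    ring
  have N3 : (0 : ℝ) ≤ ((h + 1) / 2) ^ a
      * ∑ j ∈ Finset.range k, ((1 - h ^ j) * (1 - h ^ (k - 1 - j))) := by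
    apply mul_nonneg (pow_nonneg hu0 a)
    apply Finset.sum_nonneg
    intro j _
    have e1 := pow_le_one₀ h0 h1 (n := j)
    have e2 := pow_le_one₀ h0 h1 (n := k - 1 - j)
    nlinarith
  have N3' : (0 : ℝ) ≤ ((h + 1) / 2) ^ a
      * ((k : ℝ) + (k : ℝ) * h ^ (k - 1) - 2 * ∑ j ∈ Finset.range k, h ^ j) := C1 ▸ N3
  nlinarith [E1, N1', N2, N3']

/-- Lemma 2 of the paper: for `d ≥ 1`, `k, m ≤ d`, `h ∈ [0,1)`, with
`H_k(h) = ((h+1)/2)^(d-k) h^k`, we have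
`(1-h)H_k'(h)H_m'(h) - (1-H_k(h))(H_m'(h) - (1-h)H_m''(h)) ≥ 0`. -/
theorem pairwise_inequality (d k m : ℕ) (hd : 1 ≤ d) (hk : k ≤ d) (hm : m ≤ d)
    (h : ℝ) (hh : h ∈ Set.Ico (0 : ℝ) 1) :
    (1 - h) * deriv (fun h : ℝ => ((h + 1) / 2) ^ (d - k) * h ^ k) h *
        deriv (fun h : ℝ => ((h + 1) / 2) ^ (d - m) * h ^ m) h -
      (1 - ((h + 1) / 2) ^ (d - k) * h ^ k) *
        (deriv (fun h : ℝ => ((h + 1) / 2) ^ (d - m) * h ^ m) h -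
          (1 - h) * deriv (deriv (fun h : ℝ => ((h + 1) / 2) ^ (d - m) * h ^ m)) h) ≥ 0 := by
  obtain ⟨h0, h1⟩ := hh
  simp only [deriv_g, deriv2_g]
  have ck : ((d - k : ℕ) : ℝ) + (k : ℝ) = (d : ℝ) := by
    rw [Nat.cast_sub hk]; ring
  have cm : ((d - m : ℕ) : ℝ) + (m : ℝ) = (d : ℝ) := by
    rw [Nat.cast_sub hm]; ring
  have F4 := lemA (d - m) m h h0
  rw [cm] at F4
  have F5 := lemB (d - k) k h h0 (le_of_lt h1)
  rw [ck] at F5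
  rw [geomS (d - k) k h] at F5
  rw [geomS (d - k) k h]
  set S : ℝ := (∑ i ∈ Finset.range (d - k), ((h + 1) / 2) ^ i) / 2
      + ((h + 1) / 2) ^ (d - k) * ∑ j ∈ Finset.range k, h ^ j with hS
  set Ak : ℝ := Dg (d - k) k h with hAk
  set Am : ℝ := Dg (d - m) m h with hAm
  set Bm : ℝ := ((d - m : ℕ) : ℝ) / 2 * Dg (d - m - 1) m h
      + (m : ℝ) * Dg (d - m) (m - 1) h with hBm
  have hAmnn : 0 ≤ Am := dg_nonneg _ _ h h0
  have hSnn : 0 ≤ S := by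
    rw [hS]
    have hu0 : (0 : ℝ) ≤ (h + 1) / 2 := by linarith
    apply add_nonneg
    · apply div_nonneg _ (by norm_num)
      exact Finset.sum_nonneg fun i _ => pow_nonneg hu0 i
    · exact mul_nonneg (pow_nonneg hu0 _)
        (Finset.sum_nonneg fun j _ => pow_nonneg h0 j)
  -- chain
  have m1 : S * (1 - h) * (((d : ℝ) - 1) * Am) ≤ S * (1 - h) * ((h + 1) * Bm) :=
    mul_le_mul_of_nonneg_left F4 (mul_nonneg hSnn (by linarith))
  have F5'' : (h + 1) * (S - Ak) ≤ ((d : ℝ) - 1) * ((1 - h) * S) := by nlinarith [F5]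
  have m2 : ((h + 1) * (S - Ak)) * Am ≤ (((d : ℝ) - 1) * ((1 - h) * S)) * Am :=
    mul_le_mul_of_nonneg_right F5'' hAmnn
  have hX : 0 ≤ (h + 1) * (Ak * Am - S * Am + (1 - h) * S * Bm) := by nlinarith [m1, m2]
  have hpos : (0 : ℝ) < h + 1 := by linarith
  have hX' : 0 ≤ Ak * Am - S * Am + (1 - h) * S * Bm :=
    le_of_mul_le_mul_left (by linarith [hX]) hpos
  have final : (1 - h) * Ak * Am - ((1 - h) * S) * (Am - (1 - h) * Bm)
      = (1 - h) * (Ak * Am - S * Am + (1 - h) * S * Bm) := by ring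
  rw [ge_iff_le, final]
  exact mul_nonneg (by linarith) hX'
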